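/- Let $p$ be a prime, $(G, \theta)$ a $p$-oriented profinite group satisfying formal Hilbert 90, and let $S$ be the discrete $G$-module with underlying group $\mathbb{Q}/\mathbb{Z}_{(p)}$ on which $G$ acts via $\theta$. Then for every open subgroup $H \subseteq G$ and every $n \geq 1$, the map $H^1(H, S[p^n]) \to H^1(H, S[p^{n-1}])$ induced by multiplication by $p$ on $S$ is surjective. -/

import Mathlib

open scoped Padic

/-- The twisted action of `g : G` on `ℤ/pᵐℤ(1)`: multiplication by the image of
`θ g ∈ ℤ_p^×` in `ℤ/pᵐℤ`. With this action, `ℤ/pᵐℤ` is the `G`-module `S[pᵐ]`,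
where `S = ℚ/ℤ_(p)` with `G` acting via `θ`. -/
noncomputable def thetaAct {p : ℕ} [Fact p.Prime] {G : Type*} [Group G]
    (θ : G →* ℤ_[p]ˣ) (m : ℕ) (g : G) (v : ZMod (p ^ m)) : ZMod (p ^ m) :=
  PadicInt.toZModPow m ((θ g : ℤ_[p])) * v

/-- A continuous 1-cocycle of `H` valued in `ℤ/pᵐℤ(1)`. -/
def IsTwCocycle {p : ℕ} [Fact p.Prime] {G : Type*} [Group G] [TopologicalSpace G]
    (θ : G →* ℤ_[p]ˣ) (H : Subgroup G) (m : ℕ) (σ : ↥H → ZMod (p ^ m)) : Prop :=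
  Continuous σ ∧ ∀ a b : ↥H, σ (a * b) = σ a + thetaAct θ m (a : G) (σ b)


open scoped Padic

section AuxLemmas

variable {p : ℕ} [Fact p.Prime]

private lemma cast_val_self {n : ℕ} [NeZero n] (x : ZMod n) : ((x.val : ℕ) : ZMod n) = x := by
  rw [ZMod.natCast_val, ZMod.cast_id]

/-- The "multiplication by `p`" section `ZMod (p^m) → ZMod (p^(m+1))`. -/
private def iotaFun (p m : ℕ) (x : ZMod (p ^ m)) : ZMod (p ^ (m + 1)) :=
  ((p * x.val : ℕ) : ZMod (p ^ (m + 1)))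

private lemma iota_natCast (m a : ℕ) :
    iotaFun p m ((a : ZMod (p ^ m))) = ((p * a : ℕ) : ZMod (p ^ (m + 1))) := by
  unfold iotaFun
  rw [ZMod.val_natCast, ZMod.natCast_eq_natCast_iff]
  have h1 : a % p ^ m ≡ a [MOD p ^ m] := Nat.mod_modEq a (p ^ m)
  have h2 := Nat.ModEq.mul_left' (c := p) h1
  rwa [← pow_succ'] at h2

private lemma iota_add (m : ℕ) (x y : ZMod (p ^ m)) :
    iotaFun p m (x + y) = iotaFun p m x + iotaFun p m y := by
  rw [← cast_val_self x, ← cast_val_self y, ← Nat.cast_add, iota_natCast, iota_natCast,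
    iota_natCast]
  push_cast
  ring

private lemma iota_sub (m : ℕ) (x y : ZMod (p ^ m)) :
    iotaFun p m (x - y) = iotaFun p m x - iotaFun p m y :=
  map_sub (AddMonoidHom.mk' (iotaFun p m) (iota_add m)) x y

private lemma iota_injective (m : ℕ) : Function.Injective (iotaFun p m) := by
  intro x y hxy
  rw [← cast_val_self x, ← cast_val_self y] at hxy ⊢
  rw [iota_natCast, iota_natCast, ZMod.natCast_eq_natCast_iff, pow_succ'] at hxy
  have h1 := Nat.ModEq.mul_left_cancel' (Fact.out : p.Prime).ne_zero hxy
  have h2 : x.val = y.val := by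
    have hx := ZMod.val_lt x
    have hy := ZMod.val_lt y
    unfold Nat.ModEq at h1
    rwa [Nat.mod_eq_of_lt hx, Nat.mod_eq_of_lt hy] at h1
  rw [h2]

private lemma iota_smul (m : ℕ) (h : p ^ m ∣ p ^ (m + 1)) (A : ZMod (p ^ (m + 1)))
    (x : ZMod (p ^ m)) :
    iotaFun p m (ZMod.castHom h (ZMod (p ^ m)) A * x) = A * iotaFun p m x := by
  rw [← cast_val_self A, ← cast_val_self x, map_natCast, ← Nat.cast_mul, iota_natCast,
    iota_natCast, ← Nat.cast_mul]
  congr 1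
  ring

private lemma castHom_iota (m : ℕ) (h : p ^ (m + 1) ∣ p ^ (m + 2))
    (h' : p ^ m ∣ p ^ (m + 1)) (x : ZMod (p ^ (m + 1))) :
    ZMod.castHom h (ZMod (p ^ (m + 1))) (iotaFun p (m + 1) x) =
      iotaFun p m (ZMod.castHom h' (ZMod (p ^ m)) x) := by
  rw [← cast_val_self x, map_natCast, iota_natCast, iota_natCast, map_natCast]

private lemma iota_div (m : ℕ) (y : ZMod (p ^ (m + 1))) (hy : p ∣ y.val) :
    iotaFun p m (((y.val / p : ℕ) : ZMod (p ^ m))) = y := by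
  rw [iota_natCast, Nat.mul_div_cancel' hy, cast_val_self]

private lemma dvd_val_of_castHom_eq_zero (m : ℕ) (h : p ^ 1 ∣ p ^ (m + 1))
    (y : ZMod (p ^ (m + 1))) (hy : ZMod.castHom h (ZMod (p ^ 1)) y = 0) : p ∣ y.val := by
  rw [← cast_val_self y, map_natCast] at hy
  have := (ZMod.natCast_eq_zero_iff ..).mp hy
  rwa [pow_one] at this

private lemma continuous_toZModPow (m : ℕ) :
    Continuous (PadicInt.toZModPow (p := p) m) := by
  apply IsLocallyConstant.continuous
  rw [IsLocallyConstant.iff_exists_open]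
  intro a
  refine ⟨Metric.ball a ((p : ℝ) ^ (-(m : ℤ))), Metric.isOpen_ball,
    Metric.mem_ball_self (zpow_pos (by exact_mod_cast (Fact.out : p.Prime).pos) _), ?_⟩
  intro b hb
  have hker : b - a ∈ RingHom.ker (PadicInt.toZModPow (p := p) m) := by
    rw [PadicInt.ker_toZModPow, ← PadicInt.norm_le_pow_iff_mem_span_pow]
    exact le_of_lt (mem_ball_iff_norm.mp hb)
  have h0 : PadicInt.toZModPow (p := p) m (b - a) = 0 := hker
  rw [map_sub, sub_eq_zero] at h0
  exact h0

variable {G : Type*} [Group G] (θ : G →* ℤ_[p]ˣ)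

private lemma thetaAct_add (m : ℕ) (g : G) (v w : ZMod (p ^ m)) :
    thetaAct θ m g (v + w) = thetaAct θ m g v + thetaAct θ m g w := mul_add _ _ _

private lemma thetaAct_sub (m : ℕ) (g : G) (v w : ZMod (p ^ m)) :
    thetaAct θ m g (v - w) = thetaAct θ m g v - thetaAct θ m g w := mul_sub _ _ _

private lemma thetaAct_mul (m : ℕ) (a b : G) (v : ZMod (p ^ m)) :
    thetaAct θ m (a * b) v = thetaAct θ m a (thetaAct θ m b v) := by
  unfold thetaAct
  rw [map_mul, Units.val_mul, map_mul, mul_assoc]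

private lemma thetaAct_castHom (k m : ℕ) (hkm : k ≤ m) (h : p ^ k ∣ p ^ m) (g : G)
    (v : ZMod (p ^ m)) :
    ZMod.castHom h (ZMod (p ^ k)) (thetaAct θ m g v) =
      thetaAct θ k g (ZMod.castHom h (ZMod (p ^ k)) v) := by
  unfold thetaAct
  rw [map_mul]
  congr 1
  rw [ZMod.castHom_apply, PadicInt.cast_toZModPow _ _ hkm]

private lemma thetaAct_iota (m : ℕ) (g : G) (v : ZMod (p ^ m)) :
    iotaFun p m (thetaAct θ m g v) = thetaAct θ (m + 1) g (iotaFun p m v) := by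
  have h1 : thetaAct θ m g v =
      ZMod.castHom (pow_dvd_pow p (Nat.le_succ m)) (ZMod (p ^ m))
        (PadicInt.toZModPow (m + 1) ((θ g : ℤ_[p]))) * v := by
    unfold thetaAct
    congr 1
    rw [ZMod.castHom_apply, PadicInt.cast_toZModPow _ _ (Nat.le_succ m)]
  rw [h1, iota_smul]
  rfl

variable [TopologicalSpace G] {H : Subgroup G}

private lemma cocycle_sub {m : ℕ} {f g : ↥H → ZMod (p ^ m)} (hf : IsTwCocycle θ H m f)
    (hg : IsTwCocycle θ H m g) : IsTwCocycle θ H m (fun h => f h - g h) := by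
  constructor
  · exact (continuous_of_discreteTopology
      (f := fun q : ZMod (p ^ m) × ZMod (p ^ m) => q.1 - q.2)).comp (hf.1.prodMk hg.1)
  · intro a b
    show f (a * b) - g (a * b) = (f a - g a) + thetaAct θ m ((a : G)) (f b - g b)
    rw [hf.2 a b, hg.2 a b, thetaAct_sub]
    ring

private lemma cob_cocycle (hθ : Continuous θ) (m : ℕ) (c : ZMod (p ^ m)) :
    IsTwCocycle θ H m (fun h => thetaAct θ m (h : G) c - c) := by
  constructor
  · have h1 : Continuous fun h : ↥H => ((θ (h : G) : ℤ_[p])) :=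
      Units.continuous_val.comp (hθ.comp continuous_subtype_val)
    exact (continuous_of_discreteTopology
      (f := fun z : ZMod (p ^ m) => z * c - c)).comp ((continuous_toZModPow m).comp h1)
  · intro a b
    show thetaAct θ m ((a * b : ↥H) : G) c - c = _
    have h2 : ((a * b : ↥H) : G) = (a : G) * (b : G) := rfl
    rw [h2, thetaAct_mul, thetaAct_sub]
    ring

private lemma cocycle_castHom {m k : ℕ} (hkm : k ≤ m) (h : p ^ k ∣ p ^ m)
    {f : ↥H → ZMod (p ^ m)} (hf : IsTwCocycle θ H m f) :
    IsTwCocycle θ H k (fun x => ZMod.castHom h (ZMod (p ^ k)) (f x)) := by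
  refine ⟨(continuous_of_discreteTopology
    (f := fun y : ZMod (p ^ m) => ZMod.castHom h (ZMod (p ^ k)) y)).comp hf.1, fun a b => ?_⟩
  show ZMod.castHom h (ZMod (p ^ k)) (f (a * b)) =
    ZMod.castHom h (ZMod (p ^ k)) (f a) +
      thetaAct θ k ((a : G)) (ZMod.castHom h (ZMod (p ^ k)) (f b))
  rw [hf.2 a b, map_add, thetaAct_castHom θ k m hkm]

private lemma cocycle_iota {m : ℕ} {f : ↥H → ZMod (p ^ m)} (hf : IsTwCocycle θ H m f) :
    IsTwCocycle θ H (m + 1) (fun x => iotaFun p m (f x)) := by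
  refine ⟨(continuous_of_discreteTopology (f := iotaFun p m)).comp hf.1, fun a b => ?_⟩
  show iotaFun p m (f (a * b)) =
    iotaFun p m (f a) + thetaAct θ (m + 1) ((a : G)) (iotaFun p m (f b))
  rw [hf.2 a b, iota_add, thetaAct_iota]

end AuxLemmas

private theorem key_step (p : ℕ) [Fact p.Prime]
    (G : Type*) [Group G] [TopologicalSpace G]
    (θ : G →* ℤ_[p]ˣ) (hθ : Continuous θ)
    (hFH90 : ∀ H : Subgroup G, IsOpen (H : Set G) → ∀ n : ℕ, (hn1 : 1 ≤ n) →
      ∀ σ : ↥H → ZMod (p ^ 1), IsTwCocycle θ H 1 σ →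
        ∃ τ : ↥H → ZMod (p ^ n), IsTwCocycle θ H n τ ∧
          ∃ c : ZMod (p ^ 1), ∀ h : ↥H,
            ZMod.castHom (pow_dvd_pow p hn1) (ZMod (p ^ 1)) (τ h) =
              σ h + (thetaAct θ 1 (h : G) c - c))
    (H : Subgroup G) (hH : IsOpen (H : Set G)) :
    ∀ m : ℕ, ∀ σ : ↥H → ZMod (p ^ m), IsTwCocycle θ H m σ →
      ∃ τ : ↥H → ZMod (p ^ (m + 1)), IsTwCocycle θ H (m + 1) τ ∧
        ∃ c : ZMod (p ^ m), ∀ h : ↥H,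
          ZMod.castHom (pow_dvd_pow p (Nat.le_succ m)) (ZMod (p ^ m)) (τ h) =
            σ h + (thetaAct θ m (h : G) c - c) := by
  intro m
  induction m with
  | zero =>
    intro σ hσ
    haveI : Subsingleton (ZMod (p ^ 0)) := by rw [pow_zero]; exact inferInstance
    refine ⟨0, ⟨continuous_const, fun a b => ?_⟩, 0, fun h => Subsingleton.elim _ _⟩
    show (0 : ZMod (p ^ 1)) = 0 + thetaAct θ 1 ((a : G)) 0
    simp [thetaAct]
  | succ m IH =>
    intro σ hσ
    have hmono : (1 : ℕ) ≤ m + 1 := Nat.le_add_left 1 m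
    obtain ⟨τ, hτ, c, hc⟩ := hFH90 H hH (m + 2) (by omega)
      (fun h => ZMod.castHom (pow_dvd_pow p hmono) (ZMod (p ^ 1)) (σ h))
      (cocycle_castHom θ hmono _ hσ)
    set cc : ZMod (p ^ (m + 1)) := ((c.val : ℕ) : ZMod (p ^ (m + 1))) with hccdef
    set τ' : ↥H → ZMod (p ^ (m + 1)) := fun h =>
      ZMod.castHom (pow_dvd_pow p (Nat.le_succ (m + 1))) (ZMod (p ^ (m + 1))) (τ h) with hτ'def
    have hτ' : IsTwCocycle θ H (m + 1) τ' := cocycle_castHom θ (Nat.le_succ (m + 1)) _ hτ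
    set δ : ↥H → ZMod (p ^ (m + 1)) := fun h =>
      (τ' h - σ h) - (thetaAct θ (m + 1) (h : G) cc - cc) with hδdef
    have hδ : IsTwCocycle θ H (m + 1) δ :=
      cocycle_sub θ (cocycle_sub θ hτ' hσ) (cob_cocycle θ hθ (m + 1) cc)
    have hcc1 : ZMod.castHom (pow_dvd_pow p hmono) (ZMod (p ^ 1)) cc = c := by
      rw [hccdef, map_natCast, cast_val_self]
    have hdvd : ∀ h, p ∣ (δ h).val := by
      intro h
      apply dvd_val_of_castHom_eq_zero m (pow_dvd_pow p hmono)
      have hcomp := DFunLike.congr_fun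
        (ZMod.castHom_comp (pow_dvd_pow p hmono) (pow_dvd_pow p (Nat.le_succ (m + 1)))) (τ h)
      have e3 : ZMod.castHom (pow_dvd_pow p hmono) (ZMod (p ^ 1)) (τ' h) =
          ZMod.castHom (pow_dvd_pow p hmono) (ZMod (p ^ 1)) (σ h) +
            (thetaAct θ 1 ((h : G)) c - c) := by
        refine hcomp.trans ?_
        exact hc h
      rw [hδdef]
      show ZMod.castHom _ _ ((τ' h - σ h) - (thetaAct θ (m + 1) (h : G) cc - cc)) = 0
      rw [map_sub, map_sub, map_sub, thetaAct_castHom θ 1 (m + 1) hmono, hcc1, e3]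
      ring
    set ρ : ↥H → ZMod (p ^ m) := fun h => (((δ h).val / p : ℕ) : ZMod (p ^ m)) with hρdef
    have hιρ : ∀ h, iotaFun p m (ρ h) = δ h := fun h => iota_div m (δ h) (hdvd h)
    have hρ : IsTwCocycle θ H m ρ := by
      constructor
      · exact (continuous_of_discreteTopology
          (f := fun y : ZMod (p ^ (m + 1)) => ((y.val / p : ℕ) : ZMod (p ^ m)))).comp hδ.1
      · intro a b
        apply iota_injective (p := p) m
        rw [iota_add, thetaAct_iota, hιρ, hιρ, hιρ]
        exact hδ.2 a b
    obtain ⟨ρ', hρ', c₂, hc₂⟩ := IH ρ hρ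
    refine ⟨fun h => τ h - iotaFun p (m + 1) (ρ' h),
      cocycle_sub θ hτ (cocycle_iota θ hρ'), cc - iotaFun p m c₂, ?_⟩
    intro h
    show ZMod.castHom _ _ (τ h - iotaFun p (m + 1) (ρ' h)) = _
    rw [map_sub, castHom_iota m _ (pow_dvd_pow p (Nat.le_succ m)) (ρ' h), hc₂ h,
      iota_add, iota_sub, thetaAct_iota, hιρ h, hδdef]
    have efold : ZMod.castHom (pow_dvd_pow p (Nat.le_succ (m + 1)))
        (ZMod (p ^ (m + 1))) (τ h) = τ' h := rfl
    rw [efold, thetaAct_sub]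
    ring
/-- Let `(G, θ)` be a `p`-oriented profinite group satisfying formal
Hilbert 90 (for every open `H ⊆ G` and `n ≥ 1`, the map
`H¹(H, S[pⁿ]) → H¹(H, S[p])` induced by multiplication by `p^{n-1}` is surjective).
Then for every open `H ⊆ G` and every `n ≥ 1`, the map
`H¹(H, S[pⁿ]) → H¹(H, S[pⁿ⁻¹])` induced by multiplication by `p` is surjective.
Here `S[pᵐ] ≅ ℤ/pᵐℤ(1)` and both induced maps correspond to the canonical
reduction `ℤ/pⁿℤ → ℤ/pᵐℤ`; surjectivity on `H¹` is expressed at the level of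
cocycles, up to a coboundary. -/
theorem stmt16 (p : ℕ) [Fact p.Prime]
    (G : Type*) [Group G] [TopologicalSpace G] [IsTopologicalGroup G]
    [CompactSpace G] [TotallyDisconnectedSpace G]
    (θ : G →* ℤ_[p]ˣ) (hθ : Continuous θ)
    (hFH90 : ∀ H : Subgroup G, IsOpen (H : Set G) → ∀ n : ℕ, (hn1 : 1 ≤ n) →
      ∀ σ : ↥H → ZMod (p ^ 1), IsTwCocycle θ H 1 σ →
        ∃ τ : ↥H → ZMod (p ^ n), IsTwCocycle θ H n τ ∧
          ∃ c : ZMod (p ^ 1), ∀ h : ↥H,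
            ZMod.castHom (pow_dvd_pow p hn1) (ZMod (p ^ 1)) (τ h) =
              σ h + (thetaAct θ 1 (h : G) c - c)) :
    ∀ H : Subgroup G, IsOpen (H : Set G) → ∀ n : ℕ, 1 ≤ n →
      ∀ σ : ↥H → ZMod (p ^ (n - 1)), IsTwCocycle θ H (n - 1) σ →
        ∃ τ : ↥H → ZMod (p ^ n), IsTwCocycle θ H n τ ∧
          ∃ c : ZMod (p ^ (n - 1)), ∀ h : ↥H,
            ZMod.castHom (pow_dvd_pow p (Nat.sub_le n 1)) (ZMod (p ^ (n - 1))) (τ h) =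
              σ h + (thetaAct θ (n - 1) (h : G) c - c) := by
  intro H hH n hn σ hσ
  obtain ⟨m, rfl⟩ : ∃ m, n = m + 1 := ⟨n - 1, by omega⟩
  exact key_step p G θ hθ hFH90 H hH m σ hσ
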